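/- Let X be a random walk on Z with i.i.d. ±1 steps, negative mean mu < 0, started at 0. For a face-height defined as H = -4 W where W is the winding number of the loop-erasure of a two-dimensional walk whose vertical coordinate is X, the event {W >= m} forces the existence of a time l >= m^2/4 with X_l >= 0; consequently P(W >= m) <= sum over l >= m^2/4 of exp(-l mu^2 / 8) <= 2 exp(-d m^2) for d = mu^2/32 (for all m large enough). -/

import Mathlib

/-!
STATEMENT 13: Let `X` be a random walk on `ℤ` with i.i.d. `±1` steps of negative mean
`μ < 0`, started at `0`, and let `W` be the winding number about the origin of the
loop-erasure `L` of a two-dimensional walk `Y` whose vertical coordinate is `X` (the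
loop-erasure is a self-avoiding subsequence of `Y`).  Then `{W ≥ m}` forces the
existence of a time `l ≥ m²/4` with `X_l ≥ 0`, and consequently
`P(W ≥ m) ≤ ∑_{l ≥ m²/4} exp(-l μ²/8) ≤ 2 exp(-d m²)` with `d = μ²/32`, for all `m`
large enough.
-/

/-- The four diagonal unit steps on `ℤ²`. -/
def diagDirs : Set (ℤ × ℤ) := {(1, 1), (1, -1), (-1, 1), (-1, -1)}

/-- The counterclockwise winding number of the lattice path `p` about the base point `b`:
the number of right-to-left crossings of the upward vertical ray from `b` minus the
number of left-to-right crossings. -/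
noncomputable def windPath (p : ℕ → ℤ × ℤ) (b : ℤ × ℤ) : ℤ :=
  ({i : ℕ | (p (i + 1)).1 = b.1 ∧ b.2 < (p (i + 1)).2 ∧
      b.1 < (p i).1 ∧ (p (i + 2)).1 < b.1}.ncard : ℤ)
  - ({i : ℕ | (p (i + 1)).1 = b.1 ∧ b.2 < (p (i + 1)).2 ∧
      (p i).1 < b.1 ∧ b.1 < (p (i + 2)).1}.ncard : ℤ)


open Real MeasureTheory

lemma aux_sum_distinct : ∀ (H : Finset ℤ), (∀ x ∈ H, 1 ≤ x) →
    (H.card : ℤ) * (H.card + 1) ≤ 2 * ∑ x ∈ H, x := by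
  intro H
  induction H using Finset.induction_on_max with
  | empty => intro _; simp
  | insert a s hlt ih =>
    intro hpos
    have ha : 1 ≤ a := hpos a (Finset.mem_insert_self a s)
    have hans : a ∉ s := fun h => absurd (hlt a h) (lt_irrefl a)
    have hsub : s ⊆ Finset.Icc 1 (a - 1) := by
      intro x hx
      simp only [Finset.mem_Icc]
      exact ⟨hpos x (Finset.mem_insert_of_mem hx), by linarith [hlt x hx]⟩
    have hcard : (s.card : ℤ) ≤ a - 1 := by
      have h1 := Finset.card_le_card hsub
      have h2 : (Finset.Icc (1:ℤ) (a-1)).card = (a - 1 + 1 - 1).toNat := Int.card_Icc _ _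
      omega
    have ih' := ih (fun x hx => hpos x (Finset.mem_insert_of_mem hx))
    rw [Finset.card_insert_of_notMem hans, Finset.sum_insert hans]
    push_cast
    push_cast at ih'
    nlinarith [ih', hcard]

lemma aux_cross (x : ℕ → ℤ) (hstep : ∀ n, x (n+1) = x n + 1 ∨ x (n+1) = x n - 1)
    {a b : ℕ} (ha : x a = -1) (hb : x b = 1) (hab : a ≤ b) :
    ∃ c, a < c ∧ c < b ∧ x (c-1) = -1 ∧ x c = 0 ∧ x (c+1) = 1 := by
  classical
  have hQ : ∃ k, x (a + k) = 1 := ⟨b - a, by rw [Nat.add_sub_cancel' hab]; exact hb⟩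
  set d := Nat.find hQ with hd_def
  have hd : x (a + d) = 1 := Nat.find_spec hQ
  have hmin : ∀ e, e < d → x (a + e) ≠ 1 := fun e he => Nat.find_min hQ he
  have hdb : d ≤ b - a := Nat.find_min' hQ (by rw [Nat.add_sub_cancel' hab]; exact hb)
  have hneg : ∀ e, e < d → x (a + e) ≤ 0 := by
    intro e
    induction e with
    | zero => intro _; simp only [Nat.add_zero, ha]; omega
    | succ e ih =>
      intro h
      have h1 := ih (by omega)
      have h2 := hstep (a + e)
      have h3 : x (a + (e+1)) ≠ 1 := hmin _ h
      have he : a + (e+1) = (a+e) + 1 := rfl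
      rw [he] at h3 ⊢
      omega
  have hd0 : d ≠ 0 := by
    intro h
    rw [h] at hd
    simp only [Nat.add_zero] at hd
    omega
  have hd1 : d ≠ 1 := by
    intro h
    rw [h] at hd
    have h2 := hstep a
    omega
  obtain ⟨c, hc⟩ : ∃ c, c = a + d - 1 := ⟨_, rfl⟩
  have hc1 : c + 1 = a + d := by omega
  have hc0 : c = a + (d-1) := by omega
  have hcm : c - 1 = a + (d-2) := by omega
  have h1 : x c ≤ 0 := by rw [hc0]; exact hneg _ (by omega)
  have h2 : x (c-1) ≤ 0 := by rw [hcm]; exact hneg _ (by omega)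
  have h3 := hstep c
  have h4 := hstep (c-1)
  have h5 : c - 1 + 1 = c := by omega
  rw [hc1] at h3
  rw [h5] at h4
  have hxc : x c = 0 := by omega
  exact ⟨c, by omega, by omega, by omega, hxc, by rw [hc1]; exact hd⟩

lemma aux_mgf_bound {s : ℝ} (hs : 0 < s) (hs1 : s ≤ 1) :
    Real.cosh s - s * Real.sinh s ≤ Real.exp (-(s^2/4)) := by
  have hsinh : s < Real.sinh s := Real.self_lt_sinh_iff.mpr hs
  have habs : |s| ≤ 1 := by rw [abs_of_pos hs]; exact hs1
  have h3 : (0:ℕ) < 3 := by norm_num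
  have hb1 := Real.exp_bound habs h3
  have habs' : |(-s)| ≤ 1 := by rwa [abs_neg]
  have hb2 := Real.exp_bound habs' h3
  rw [abs_of_pos hs] at hb1
  rw [abs_neg, abs_of_pos hs] at hb2
  norm_num [Finset.sum_range_succ, Nat.factorial] at hb1 hb2
  have hcosh : Real.cosh s ≤ 1 + s^2/2 + 2/9 * s^3 := by
    rw [Real.cosh_eq]
    have h1 := abs_le.mp hb1
    have h2 := abs_le.mp hb2
    nlinarith [h1.2, h2.2]
  have hexp : 1 - s^2/4 ≤ Real.exp (-(s^2/4)) := by
    linarith [Real.add_one_le_exp (-(s^2/4))]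
  have h9 : s^3 ≤ s^2 := by nlinarith
  nlinarith [mul_le_mul_of_nonneg_left hsinh.le hs.le]


lemma aux_lip (y : ℕ → ℤ) (hstep : ∀ n, y (n+1) = y n + 1 ∨ y (n+1) = y n - 1) :
    ∀ u k, y u - y (u+k) ≤ (k:ℤ) ∧ y (u+k) - y u ≤ (k:ℤ) := by
  intro u k
  induction k with
  | zero => simp
  | succ k ih =>
    have h := hstep (u + k)
    have he : u + (k+1) = (u+k) + 1 := rfl
    rw [he]
    push_cast
    push_cast at ih
    omega

lemma aux_key (P : ℕ → ℤ × ℤ) (hinj : Function.Injective P)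
    (hstep : ∀ n, P (n+1) - P n ∈ diagDirs) (m : ℕ) (hm : 1 ≤ m)
    (hA : {i : ℕ | (P (i + 1)).1 = 0 ∧ 0 < (P (i + 1)).2 ∧ 0 < (P i).1 ∧ (P (i + 2)).1 < 0}.Finite)
    (hB : {i : ℕ | (P (i + 1)).1 = 0 ∧ 0 < (P (i + 1)).2 ∧ (P i).1 < 0 ∧ 0 < (P (i + 2)).1}.Finite)
    (hcard : m + {i : ℕ | (P (i + 1)).1 = 0 ∧ 0 < (P (i + 1)).2 ∧ (P i).1 < 0 ∧ 0 < (P (i + 2)).1}.ncard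
      ≤ {i : ℕ | (P (i + 1)).1 = 0 ∧ 0 < (P (i + 1)).2 ∧ 0 < (P i).1 ∧ (P (i + 2)).1 < 0}.ncard) :
    ∃ i ∈ {i : ℕ | (P (i + 1)).1 = 0 ∧ 0 < (P (i + 1)).2 ∧ 0 < (P i).1 ∧ (P (i + 2)).1 < 0},
      (m : ℤ) * ((m:ℤ) - 1) ≤ 2 * (i:ℤ) := by
  classical
  set A := {i : ℕ | (P (i + 1)).1 = 0 ∧ 0 < (P (i + 1)).2 ∧ 0 < (P i).1 ∧ (P (i + 2)).1 < 0} with hA_def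
  set B := {i : ℕ | (P (i + 1)).1 = 0 ∧ 0 < (P (i + 1)).2 ∧ (P i).1 < 0 ∧ 0 < (P (i + 2)).1} with hB_def
  have hstep' : ∀ n, ((P (n+1)).1 = (P n).1 + 1 ∨ (P (n+1)).1 = (P n).1 - 1) ∧
      ((P (n+1)).2 = (P n).2 + 1 ∨ (P (n+1)).2 = (P n).2 - 1) := by
    intro n
    have h := hstep n
    simp only [diagDirs, Set.mem_insert_iff, Set.mem_singleton_iff, Prod.ext_iff, Prod.fst_sub,
      Prod.snd_sub] at h
    norm_num at h
    omega
  have memA : ∀ i ∈ A, (P (i+1)).1 = 0 ∧ 0 < (P (i+1)).2 ∧ (P i).1 = 1 ∧ (P (i+2)).1 = -1 := by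
    intro i hi
    obtain ⟨h1, h2, h3, h4⟩ := hi
    have s1 := (hstep' i).1
    have s2 := (hstep' (i+1)).1
    have e : i + 2 = (i+1)+1 := rfl
    rw [e] at h4 ⊢
    exact ⟨h1, h2, by omega, by omega⟩
  have hA' : (setOf (· ∈ A)).Finite := hA
  have hB' : (setOf (· ∈ B)).Finite := hB
  set K := hA'.toFinset.card with hK
  have hKA : A.ncard = K := Set.ncard_eq_toFinset_card _ hA'
  have hKB : B.ncard = hB'.toFinset.card := Set.ncard_eq_toFinset_card _ hB'
  set E : ℕ → ℕ := Nat.nth (· ∈ A) with hE_def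
  have hEmem : ∀ j, j < K → E j ∈ A := fun j hj => Nat.nth_mem_of_lt_card hA' hj
  have hEmono : ∀ j1 j2, j1 < j2 → j2 < K → E j1 < E j2 :=
    fun _ _ h h2 => Nat.nth_lt_nth_of_lt_card hA' h h2
  have hKm : m ≤ K := by omega
  have hgap : ∀ j, j + 1 < K → E j + 3 ≤ E (j+1) := by
    intro j hj
    have h1 := memA _ (hEmem j (by omega))
    have h2 := memA _ (hEmem (j+1) hj)
    have hlt := hEmono j (j+1) (by omega) hj
    by_contra hcon
    have hcase : E (j+1) = E j + 1 ∨ E (j+1) = E j + 2 := by omega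
    rcases hcase with h | h
    · rw [h] at h2
      have := h2.2.2.1
      have := h1.1
      omega
    · rw [h] at h2
      have := h2.2.2.1
      have := h1.2.2.2
      omega
  have hcex : ∀ j, j + 1 < K → ∃ c, E j + 2 < c ∧ c < E (j+1) ∧ (P (c-1)).1 = -1 ∧
      (P c).1 = 0 ∧ (P (c+1)).1 = 1 := by
    intro j hj
    have h1 := memA _ (hEmem j (by omega))
    have h2 := memA _ (hEmem (j+1) hj)
    have hgap' := hgap j hj
    exact aux_cross (fun n => (P n).1) (fun n => (hstep' n).1) h1.2.2.2 h2.2.2.1 (by omega)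
  set C : ℕ → ℕ := fun j => if h : j + 1 < K then (hcex j h).choose else 0 with hC_def
  have hCspec : ∀ j (h : j + 1 < K), E j + 2 < C j ∧ C j < E (j+1) ∧ (P (C j - 1)).1 = -1 ∧
      (P (C j)).1 = 0 ∧ (P (C j + 1)).1 = 1 := by
    intro j h
    simp only [hC_def, dif_pos h]
    exact (hcex j h).choose_spec
  set badF := (Finset.range (K-1)).filter (fun j => 0 < (P (C j)).2) with hbadF_def
  have hbadB : ∀ j ∈ badF, C j - 1 ∈ B := by
    intro j hj
    rw [hbadF_def, Finset.mem_filter, Finset.mem_range] at hj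
    obtain ⟨hj1, hj2⟩ := hj
    have hs := hCspec j (by omega)
    have e1 : C j - 1 + 1 = C j := by omega
    have e2 : C j - 1 + 2 = C j + 1 := by omega
    refine ⟨?_, ?_, ?_, ?_⟩
    · rw [e1]; exact hs.2.2.2.1
    · rw [e1]; exact hj2
    · have := hs.2.2.1; omega
    · rw [e2]; have := hs.2.2.2.2; omega
  have hCmono : ∀ j1 j2, j1 + 1 < K → j2 + 1 < K → j1 < j2 → C j1 < C j2 := by
    intro j1 j2 h1 h2 hlt
    have s1 := hCspec j1 h1
    have s2 := hCspec j2 h2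
    have hle : E (j1+1) ≤ E j2 := by
      rcases Nat.eq_or_lt_of_le (Nat.succ_le_of_lt hlt) with h | h
      · exact le_of_eq (congrArg E (by omega : j1 + 1 = j2))
      · exact (hEmono _ _ h (by omega)).le
    omega
  have hbadcard : badF.card ≤ B.ncard := by
    have himg : badF.image (fun j => C j - 1) ⊆ hB'.toFinset := by
      intro x hx
      rw [Finset.mem_image] at hx
      obtain ⟨j, hj, rfl⟩ := hx
      rw [Set.Finite.mem_toFinset]
      exact hbadB j hj
    have hinjC : Set.InjOn (fun j => C j - 1) badF := by
      intro j1 h1 j2 h2 heq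
      rw [Finset.mem_coe, hbadF_def, Finset.mem_filter, Finset.mem_range] at h1 h2
      have hK1 : j1 + 1 < K := by omega
      have hK2 : j2 + 1 < K := by omega
      have hg1 := (hCspec j1 hK1).1
      have hg2 := (hCspec j2 hK2).1
      by_contra hne
      simp only at heq
      rcases lt_or_gt_of_ne hne with h | h
      · have := hCmono _ _ hK1 hK2 h; omega
      · have := hCmono _ _ hK2 hK1 h; omega
    calc badF.card = (badF.image (fun j => C j - 1)).card :=
          (Finset.card_image_of_injOn hinjC).symm
      _ ≤ hB'.toFinset.card := Finset.card_le_card himg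
      _ = B.ncard := hKB.symm
  set goodF := Finset.range (K-1) \ badF with hgoodF_def
  have hgoodcard : m - 1 ≤ goodF.card := by
    have h1 : goodF.card = (K-1) - badF.card := by
      rw [hgoodF_def, Finset.card_sdiff_of_subset (by rw [hbadF_def]; exact Finset.filter_subset _ _),
        Finset.card_range]
    omega
  set hei : ℕ → ℤ := fun j => (P (E j + 1)).2 with hei_def
  have hlip := aux_lip (fun n => (P n).2) (fun n => (hstep' n).2)
  have hgb : ∀ j ∈ goodF, hei j ≤ (E (j+1) : ℤ) - (E j : ℤ) := by
    intro j hj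
    rw [hgoodF_def, Finset.mem_sdiff, Finset.mem_range] at hj
    obtain ⟨hj1, hj2⟩ := hj
    have hjK : j + 1 < K := by omega
    have hy : ¬ (0 < (P (C j)).2) := fun hcon =>
      hj2 (Finset.mem_filter.mpr ⟨Finset.mem_range.mpr hj1, hcon⟩)
    have hs := hCspec j hjK
    have hl := hlip (E j + 1) (C j - (E j + 1))
    have e : E j + 1 + (C j - (E j + 1)) = C j := by omega
    rw [e] at hl
    have hcast : ((C j - (E j + 1) : ℕ) : ℤ) = (C j : ℤ) - (E j : ℤ) - 1 := by
      have h1 := hs.1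
      omega
    have h2 := hs.2.1
    have h2' : (C j : ℤ) < (E (j+1) : ℤ) := by exact_mod_cast h2
    simp only [hei_def]
    omega
  have htel : ∑ j ∈ goodF, ((E (j+1) : ℤ) - (E j : ℤ)) ≤ (E (K-1) : ℤ) := by
    have h1 : ∑ j ∈ goodF, ((E (j+1) : ℤ) - (E j : ℤ)) ≤
        ∑ j ∈ Finset.range (K-1), ((E (j+1) : ℤ) - (E j : ℤ)) := by
      apply Finset.sum_le_sum_of_subset_of_nonneg
      · rw [hgoodF_def]; exact Finset.sdiff_subset
      · intro j hj _
        rw [Finset.mem_range] at hj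
        have := hEmono j (j+1) (by omega) (by omega)
        omega
    have h2 : ∑ j ∈ Finset.range (K-1), ((E (j+1) : ℤ) - (E j : ℤ)) =
        (E (K-1) : ℤ) - (E 0 : ℤ) := Finset.sum_range_sub (fun j => (E j : ℤ)) (K-1)
    have h3 : (0:ℤ) ≤ (E 0 : ℤ) := Int.ofNat_nonneg _
    linarith
  have hheights : ((m:ℤ) - 1) * (m:ℤ) ≤ 2 * ∑ j ∈ goodF, hei j := by
    have hinjh : Set.InjOn hei goodF := by
      intro j1 h1 j2 h2 heq
      rw [Finset.mem_coe, hgoodF_def, Finset.mem_sdiff, Finset.mem_range] at h1 h2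
      have hj1K : j1 < K := by omega
      have hj2K : j2 < K := by omega
      by_contra hne
      have hEne : E j1 ≠ E j2 := by
        rcases lt_or_gt_of_ne hne with h | h
        · exact (hEmono _ _ h hj2K).ne
        · exact (hEmono _ _ h hj1K).ne'
      have hne' : E j1 + 1 ≠ E j2 + 1 := by omega
      apply hne'
      apply hinj
      have hx1 : (P (E j1 + 1)).1 = 0 := (memA _ (hEmem j1 hj1K)).1
      have hx2 : (P (E j2 + 1)).1 = 0 := (memA _ (hEmem j2 hj2K)).1
      simp only [hei_def] at heq
      exact Prod.ext (by rw [hx1, hx2]) heq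
    have hpos : ∀ x ∈ goodF.image hei, 1 ≤ x := by
      intro x hx
      rw [Finset.mem_image] at hx
      obtain ⟨j, hj, rfl⟩ := hx
      rw [hgoodF_def, Finset.mem_sdiff, Finset.mem_range] at hj
      have := (memA _ (hEmem j (by omega))).2.1
      simp only [hei_def]
      omega
    have hsum := aux_sum_distinct (goodF.image hei) hpos
    have hcard2 : (goodF.image hei).card = goodF.card := Finset.card_image_of_injOn hinjh
    have hsum_img : ∑ x ∈ goodF.image hei, x = ∑ j ∈ goodF, hei j :=
      Finset.sum_image (fun j1 h1 j2 h2 he => hinjh h1 h2 he)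
    have hc : ((m:ℤ) - 1) ≤ ((goodF.image hei).card : ℤ) := by
      rw [hcard2]
      have := hgoodcard
      omega
    have hc0 : (0:ℤ) ≤ ((goodF.image hei).card : ℤ) := Int.ofNat_nonneg _
    nlinarith [hsum, hc, hc0, hsum_img]
  refine ⟨E (K-1), hEmem (K-1) (by omega), ?_⟩
  have hfin := Finset.sum_le_sum hgb
  nlinarith [hheights, htel, hfin]


set_option maxHeartbeats 2000000 in
theorem stmt13 {Ω : Type*} [MeasurableSpace Ω] (ℙ : MeasureTheory.Measure Ω)
    [MeasureTheory.IsProbabilityMeasure ℙ]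
    (μ : ℝ) (hμ : μ < 0)
    (ξ : ℕ → Ω → ℤ) (hmeas : ∀ i, Measurable (ξ i))
    (hindep : ProbabilityTheory.iIndepFun ξ ℙ)
    (hsteps : ∀ i ω, ξ i ω = 1 ∨ ξ i ω = -1)
    (hmean : ∀ i, ∫ ω, (ξ i ω : ℝ) ∂ℙ = μ)
    (X : ℕ → Ω → ℤ) (hX : ∀ n ω, X n ω = ∑ i ∈ Finset.range n, ξ i ω)
    (Y : ℕ → Ω → ℤ × ℤ) (hY0 : ∀ ω, Y 0 ω = (0, 0))
    (hYvert : ∀ n ω, (Y n ω).2 = X n ω)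
    (hYstep : ∀ n ω, Y (n + 1) ω - Y n ω ∈ diagDirs)
    (σ : Ω → ℕ → ℕ) (hσmono : ∀ ω, StrictMono (σ ω)) (hσ0 : ∀ ω, σ ω 0 = 0)
    (L : ℕ → Ω → ℤ × ℤ) (hL : ∀ n ω, L n ω = Y (σ ω n) ω)
    (hLsimple : ∀ ω, Function.Injective (fun n => L n ω))
    (hLstep : ∀ n ω, L (n + 1) ω - L n ω ∈ diagDirs)
    (W : Ω → ℤ) (hW : ∀ ω, W ω = windPath (fun n => L n ω) (0, 0)) :
    (∀ ω, ∀ m : ℕ, (m : ℤ) ≤ W ω → ∃ l : ℕ, (m : ℝ) ^ 2 / 4 ≤ (l : ℝ) ∧ 0 ≤ X l ω) ∧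
    ∃ m₀ : ℕ, ∀ m : ℕ, m₀ ≤ m →
      ℙ {ω | (m : ℤ) ≤ W ω}
          ≤ ∑' l : ℕ, (if (m : ℝ) ^ 2 / 4 ≤ (l : ℝ) then
              ENNReal.ofReal (Real.exp (-(l : ℝ) * μ ^ 2 / 8)) else 0) ∧
      ℙ {ω | (m : ℤ) ≤ W ω}
          ≤ ENNReal.ofReal (2 * Real.exp (-(μ ^ 2 / 32) * (m : ℝ) ^ 2)) := by
  classical
  -- PART 1
  have part1 : ∀ ω, ∀ m : ℕ, (m : ℤ) ≤ W ω → ∃ l : ℕ, (m : ℝ) ^ 2 / 4 ≤ (l : ℝ) ∧ 0 ≤ X l ω := by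
    intro ω m hm
    rcases Nat.eq_zero_or_pos m with rfl | hm1
    · exact ⟨0, by norm_num, by rw [hX]; simp⟩
    set P : ℕ → ℤ × ℤ := fun n => L n ω with hP_def
    set A := {i : ℕ | (P (i + 1)).1 = 0 ∧ 0 < (P (i + 1)).2 ∧ 0 < (P i).1 ∧ (P (i + 2)).1 < 0}
      with hA_def
    set B := {i : ℕ | (P (i + 1)).1 = 0 ∧ 0 < (P (i + 1)).2 ∧ (P i).1 < 0 ∧ 0 < (P (i + 2)).1}
      with hB_def
    have hWω : (m:ℤ) ≤ (A.ncard : ℤ) - (B.ncard : ℤ) := by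
      rw [hW ω, windPath] at hm
      simpa using hm
    have final : ∀ i : ℕ, 0 < (P (i+1)).2 → ((m:ℝ)^2/4 ≤ ((i:ℝ) + 1)) →
        ∃ l : ℕ, (m : ℝ) ^ 2 / 4 ≤ (l : ℝ) ∧ 0 ≤ X l ω := by
      intro i hy hb
      refine ⟨σ ω (i+1), ?_, ?_⟩
      · have h1 : i + 1 ≤ σ ω (i+1) := (hσmono ω).le_apply
        have h2 : ((i:ℝ) + 1) ≤ ((σ ω (i+1) : ℕ) : ℝ) := by exact_mod_cast h1
        linarith
      · have h3 : X (σ ω (i+1)) ω = (P (i+1)).2 := by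
          rw [hP_def]
          simp only [hL]
          rw [hYvert]
        rw [h3]
        exact hy.le
    by_cases hAfin : A.Finite
    · by_cases hBfin : B.Finite
      · have hcard : m + B.ncard ≤ A.ncard := by omega
        obtain ⟨i, hiA, hi⟩ := aux_key P (hLsimple ω) (fun n => hLstep n ω) m hm1 hAfin hBfin hcard
        apply final i hiA.2.1
        have : (m:ℝ) * ((m:ℝ) - 1) ≤ 2 * (i:ℝ) := by exact_mod_cast hi
        have hm1' : (1:ℝ) ≤ (m:ℝ) := by exact_mod_cast hm1
        nlinarith
      · obtain ⟨i, hiB, hilt⟩ := Set.Infinite.exists_gt hBfin ⌈(m:ℝ)^2/4⌉₊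
        apply final i hiB.2.1
        have h1 : (m:ℝ)^2/4 ≤ (⌈(m:ℝ)^2/4⌉₊ : ℝ) := Nat.le_ceil _
        have h2 : ((⌈(m:ℝ)^2/4⌉₊ : ℕ) : ℝ) ≤ (i:ℝ) := by exact_mod_cast hilt.le
        linarith
    · obtain ⟨i, hiA, hilt⟩ := Set.Infinite.exists_gt hAfin ⌈(m:ℝ)^2/4⌉₊
      apply final i hiA.2.1
      have h1 : (m:ℝ)^2/4 ≤ (⌈(m:ℝ)^2/4⌉₊ : ℝ) := Nat.le_ceil _
      have h2 : ((⌈(m:ℝ)^2/4⌉₊ : ℕ) : ℝ) ≤ (i:ℝ) := by exact_mod_cast hilt.le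
      linarith
  refine ⟨part1, ?_⟩
  -- PART 2 : probabilistic bounds
  set ξR : ℕ → Ω → ℝ := fun i ω => ((ξ i ω : ℤ) : ℝ) with hξR_def
  have hmeasR : ∀ i, Measurable (ξR i) := fun i =>
    Measurable.comp (Measurable.of_discrete) (hmeas i)
  have hindepR : ProbabilityTheory.iIndepFun ξR ℙ :=
    hindep.comp (fun _ => (Int.cast : ℤ → ℝ)) (fun _ => Measurable.of_discrete)
  have hintR : ∀ i, Integrable (ξR i) ℙ := by
    intro i
    apply MeasureTheory.Integrable.mono' (integrable_const (1:ℝ)) (hmeasR i).aestronglyMeasurable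
    filter_upwards with ω
    rcases hsteps i ω with h | h <;> simp [hξR_def, h]
  have hμ1 : -1 ≤ μ := by
    have hb : |∫ ω, ξR 0 ω ∂ℙ| ≤ 1 := by
      have h1 : |∫ ω, ξR 0 ω ∂ℙ| ≤ ∫ ω, |ξR 0 ω| ∂ℙ := by
        simpa [Real.norm_eq_abs] using norm_integral_le_integral_norm (μ := ℙ) (ξR 0)
      have h2 : ∫ ω, |ξR 0 ω| ∂ℙ = 1 := by
        have : ∀ ω, |ξR 0 ω| = 1 := by
          intro ω; rcases hsteps 0 ω with h | h <;> simp [hξR_def, h]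
        rw [integral_congr_ae (Filter.Eventually.of_forall this)]
        simp
      linarith
    have := hmean 0
    rw [hξR_def] at hb
    rw [this] at hb
    linarith [abs_le.mp hb]
  set t : ℝ := -μ with ht_def
  have ht : 0 < t := by rw [ht_def]; linarith
  have ht1 : t ≤ 1 := by rw [ht_def]; linarith
  have hmgf1 : ∀ i, ProbabilityTheory.mgf (ξR i) ℙ t ≤ Real.exp (-(μ^2/4)) := by
    intro i
    have hpt : (fun ω => Real.exp (t * ξR i ω)) =
        fun ω => Real.cosh t + ξR i ω * Real.sinh t := by
      funext ω
      rcases hsteps i ω with h | h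
      · simp only [hξR_def, h]
        push_cast
        rw [mul_one, one_mul]
        exact (Real.cosh_add_sinh t).symm
      · simp only [hξR_def, h]
        push_cast
        rw [mul_neg_one, neg_one_mul, ← Real.cosh_sub_sinh]
        ring
    have hmgf_eq : ProbabilityTheory.mgf (ξR i) ℙ t = Real.cosh t + μ * Real.sinh t := by
      rw [ProbabilityTheory.mgf, hpt, integral_add (integrable_const _) ((hintR i).mul_const _),
        integral_const, probReal_univ, one_smul, integral_mul_const, hmean i]
    rw [hmgf_eq]
    have e1 : Real.cosh t + μ * Real.sinh t = Real.cosh t - t * Real.sinh t := by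
      rw [ht_def]; ring
    have e2 : -(μ^2/4) = -(t^2/4) := by rw [ht_def]; ring
    rw [e1, e2]
    exact aux_mgf_bound ht ht1
  have hoeff : ∀ l : ℕ, ℙ {ω | 0 ≤ X l ω} ≤ ENNReal.ofReal (Real.exp (-(l:ℝ) * (μ^2/4))) := by
    intro l
    set S : Ω → ℝ := ∑ i ∈ Finset.range l, ξR i with hS_def
    have hSapp : ∀ ω, S ω = ∑ i ∈ Finset.range l, ξR i ω := by
      intro ω; rw [hS_def, Finset.sum_apply]
    have hSfun : S = fun ω => ∑ i ∈ Finset.range l, ξR i ω := funext hSapp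
    have hSmeas : Measurable S := by
      rw [hSfun]; exact Finset.measurable_sum _ (fun i _ => hmeasR i)
    have hset : {ω | 0 ≤ X l ω} = {ω | (0:ℝ) ≤ S ω} := by
      ext ω
      simp only [Set.mem_setOf_eq, hSapp, hX, hξR_def]
      constructor
      · intro h
        push_cast
        exact_mod_cast h
      · intro h
        exact_mod_cast (by push_cast; exact h : ((0:ℤ):ℝ) ≤ ((∑ i ∈ Finset.range l, ξ i ω : ℤ) : ℝ))
    have hSbound : ∀ ω, S ω ≤ l := by
      intro ω
      rw [hSapp]
      calc ∑ i ∈ Finset.range l, ξR i ω ≤ ∑ _i ∈ Finset.range l, (1:ℝ) :=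
            Finset.sum_le_sum (fun i _ => by rcases hsteps i ω with h | h <;> simp [hξR_def, h])
        _ = l := by simp
    have h_int : Integrable (fun ω => Real.exp (t * S ω)) ℙ := by
      apply Integrable.mono' (integrable_const (Real.exp (t * l)))
        ((hSmeas.const_mul t).exp.aestronglyMeasurable)
      filter_upwards with ω
      rw [Real.norm_eq_abs, abs_of_pos (Real.exp_pos _)]
      exact Real.exp_le_exp.mpr (mul_le_mul_of_nonneg_left (hSbound ω) ht.le)
    have hcher := ProbabilityTheory.measure_ge_le_exp_mul_mgf (μ := ℙ) (X := S) 0 ht.le h_int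
    have hmgfS : ProbabilityTheory.mgf S ℙ t ≤ Real.exp (-(l:ℝ) * (μ^2/4)) := by
      rw [hS_def, ProbabilityTheory.iIndepFun.mgf_sum hindepR hmeasR]
      calc ∏ i ∈ Finset.range l, ProbabilityTheory.mgf (ξR i) ℙ t
          ≤ ∏ _i ∈ Finset.range l, Real.exp (-(μ^2/4)) :=
            Finset.prod_le_prod (fun i _ => ProbabilityTheory.mgf_nonneg) (fun i _ => hmgf1 i)
        _ = Real.exp (-(μ^2/4)) ^ l := by rw [Finset.prod_const, Finset.card_range]
        _ = Real.exp ((l:ℝ) * -(μ^2/4)) := (Real.exp_nat_mul _ l).symm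
        _ = Real.exp (-(l:ℝ) * (μ^2/4)) := by ring_nf
    rw [hset, ENNReal.le_ofReal_iff_toReal_le (measure_ne_top _ _) (Real.exp_nonneg _)]
    calc (ℙ {ω | 0 ≤ S ω}).toReal ≤ Real.exp (-t * 0) * ProbabilityTheory.mgf S ℙ t := hcher
      _ = ProbabilityTheory.mgf S ℙ t := by simp
      _ ≤ _ := hmgfS
  -- union bound
  have part2core : ∀ m : ℕ, ℙ {ω | (m : ℤ) ≤ W ω} ≤
      ∑' l : ℕ, (if (m:ℝ)^2/4 ≤ (l:ℝ) then
        ENNReal.ofReal (Real.exp (-(l:ℝ) * (μ^2/4))) else 0) := by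
    intro m
    have hsub : {ω | (m:ℤ) ≤ W ω} ⊆ ⋃ l : ℕ, {ω | ((m:ℝ)^2/4 ≤ (l:ℝ)) ∧ 0 ≤ X l ω} := by
      intro ω hω
      obtain ⟨l, hl1, hl2⟩ := part1 ω m hω
      exact Set.mem_iUnion.mpr ⟨l, hl1, hl2⟩
    refine (measure_mono hsub).trans ((measure_iUnion_le _).trans (ENNReal.tsum_le_tsum fun l => ?_))
    by_cases hc : (m:ℝ)^2/4 ≤ (l:ℝ)
    · rw [if_pos hc]
      exact (measure_mono (fun ω hω => hω.2)).trans (hoeff l)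
    · rw [if_neg hc]
      have : {ω | ((m:ℝ)^2/4 ≤ (l:ℝ)) ∧ 0 ≤ X l ω} = ∅ := by
        ext ω; simp only [Set.mem_setOf_eq, Set.mem_empty_iff_false, iff_false]
        exact fun h => hc h.1
      rw [this, measure_empty]
  set q : ℝ := Real.exp (-(μ^2/4)) with hq_def
  have hμ2 : 0 < μ^2 := by nlinarith
  have hq0 : 0 < q := Real.exp_pos _
  have hq1 : q < 1 := by
    rw [hq_def, Real.exp_lt_one_iff]
    linarith
  have h1mq : 0 < 1 - q := by linarith
  refine ⟨⌈(16:ℝ) / ((1 - q) * μ^2)⌉₊ + 1, fun m hm => ⟨?_, ?_⟩⟩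
  · refine (part2core m).trans (ENNReal.tsum_le_tsum fun l => ?_)
    by_cases hc : (m:ℝ)^2/4 ≤ (l:ℝ)
    · rw [if_pos hc, if_pos hc]
      apply ENNReal.ofReal_le_ofReal
      apply Real.exp_le_exp.mpr
      have hl0 : (0:ℝ) ≤ (l:ℝ) := Nat.cast_nonneg l
      nlinarith
    · rw [if_neg hc, if_neg hc]
  · refine (part2core m).trans ?_
    set L₀ := ⌈(m:ℝ)^2/4⌉₊ with hL₀_def
    set g : ℕ → ENNReal := fun l => if L₀ ≤ l then
        ENNReal.ofReal (Real.exp (-(l:ℝ) * (μ^2/4))) else 0 with hg_def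
    have hle1 : (∑' l : ℕ, (if (m:ℝ)^2/4 ≤ (l:ℝ) then
        ENNReal.ofReal (Real.exp (-(l:ℝ) * (μ^2/4))) else 0)) ≤ ∑' l : ℕ, g l := by
      apply ENNReal.tsum_le_tsum
      intro l
      by_cases hc : (m:ℝ)^2/4 ≤ (l:ℝ)
      · rw [if_pos hc]
        simp only [hg_def]
        rw [if_pos (Nat.ceil_le.mpr hc)]
      · rw [if_neg hc]
        exact zero_le
    have hzero : (∑ i ∈ Finset.range L₀, g i) = 0 := by
      apply Finset.sum_eq_zero
      intro i hi
      rw [Finset.mem_range] at hi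
      simp only [hg_def]
      exact if_neg (by omega)
    have hshift : ∀ i : ℕ, g (i + L₀) = ENNReal.ofReal (q ^ L₀) * (ENNReal.ofReal q) ^ i := by
      intro i
      simp only [hg_def]
      rw [if_pos (by omega : L₀ ≤ i + L₀), ← ENNReal.ofReal_pow hq0.le,
        ← ENNReal.ofReal_mul (pow_nonneg hq0.le _)]
      congr 1
      rw [hq_def, ← Real.exp_nat_mul, ← Real.exp_nat_mul, ← Real.exp_add]
      congr 1
      push_cast
      ring
    have hTeq : (∑' l : ℕ, g l) = ENNReal.ofReal (q ^ L₀) * (1 - ENNReal.ofReal q)⁻¹ := by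
      rw [← Summable.sum_add_tsum_nat_add' (f := g) (k := L₀) ENNReal.summable, hzero, zero_add,
        tsum_congr hshift, ENNReal.tsum_mul_left, ENNReal.tsum_geometric]
    refine hle1.trans (hTeq.trans_le ?_)
    have h1q : (1:ENNReal) - ENNReal.ofReal q = ENNReal.ofReal (1 - q) := by
      rw [ENNReal.ofReal_sub _ hq0.le, ENNReal.ofReal_one]
    rw [h1q, ← ENNReal.ofReal_inv_of_pos h1mq, ← ENNReal.ofReal_mul (pow_nonneg hq0.le _)]
    apply ENNReal.ofReal_le_ofReal
    -- real inequality
    have hm1 : 1 ≤ m := by omega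
    have hmR : (1:ℝ) ≤ (m:ℝ) := by exact_mod_cast hm1
    have hL₀ : (m:ℝ)^2/4 ≤ (L₀:ℝ) := Nat.le_ceil _
    have hq_pow : q ^ L₀ = Real.exp (-(L₀:ℝ) * (μ^2/4)) := by
      rw [hq_def, ← Real.exp_nat_mul]
      ring_nf
    have hstep1 : q ^ L₀ ≤ Real.exp (-((m:ℝ)^2 * (μ^2/16))) := by
      rw [hq_pow]
      apply Real.exp_le_exp.mpr
      nlinarith [hμ2.le, hL₀]
    have hmm : 16 / ((1 - q) * μ^2) ≤ (m:ℝ)^2 := by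
      have hceil : (16:ℝ) / ((1 - q) * μ^2) ≤ (⌈(16:ℝ) / ((1 - q) * μ^2)⌉₊ : ℝ) := Nat.le_ceil _
      have hmge : ((⌈(16:ℝ) / ((1 - q) * μ^2)⌉₊ + 1 : ℕ) : ℝ) ≤ (m:ℝ) := by exact_mod_cast hm
      push_cast at hmge
      nlinarith
    have hx : 0 < (m:ℝ)^2 * μ^2 := mul_pos (by nlinarith [hmR] : (0:ℝ) < (m:ℝ)^2) hμ2
    have hexp_inv : Real.exp (-((m:ℝ)^2 * μ^2/32)) ≤ 32/((m:ℝ)^2 * μ^2) := by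
      rw [Real.exp_neg]
      have hy : 0 < (m:ℝ)^2 * μ^2/32 := by linarith
      have h1 : (m:ℝ)^2 * μ^2/32 ≤ Real.exp ((m:ℝ)^2 * μ^2/32) := by
        linarith [Real.add_one_le_exp ((m:ℝ)^2 * μ^2/32)]
      have h2 : ((m:ℝ)^2 * μ^2/32)⁻¹ = 32/((m:ℝ)^2 * μ^2) := by
        field_simp
      rw [← h2]
      exact inv_anti₀ hy h1
    have h2b : 32/((m:ℝ)^2 * μ^2) ≤ 2*(1-q) := by
      rw [div_le_iff₀ hx]
      have h16 : 16 ≤ (m:ℝ)^2 * ((1 - q) * μ^2) := (div_le_iff₀ (mul_pos h1mq hμ2)).mp hmm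
      nlinarith
    have hsplit : Real.exp (-((m:ℝ)^2 * (μ^2/16))) =
        Real.exp (-(μ^2/32) * (m:ℝ)^2) * Real.exp (-((m:ℝ)^2 * μ^2/32)) := by
      rw [← Real.exp_add]
      ring_nf
    calc q ^ L₀ * (1-q)⁻¹ ≤ Real.exp (-((m:ℝ)^2 * (μ^2/16))) * (1-q)⁻¹ :=
          mul_le_mul_of_nonneg_right hstep1 (inv_nonneg.mpr h1mq.le)
      _ = Real.exp (-(μ^2/32) * (m:ℝ)^2) * (Real.exp (-((m:ℝ)^2 * μ^2/32)) * (1-q)⁻¹) := by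
          rw [hsplit]; ring
      _ ≤ Real.exp (-(μ^2/32) * (m:ℝ)^2) * 2 := by
          apply mul_le_mul_of_nonneg_left _ (Real.exp_nonneg _)
          calc Real.exp (-((m:ℝ)^2 * μ^2/32)) * (1-q)⁻¹
              ≤ (2*(1-q)) * (1-q)⁻¹ :=
                mul_le_mul_of_nonneg_right (hexp_inv.trans h2b) (inv_nonneg.mpr h1mq.le)
            _ = 2 := by field_simp
      _ = 2 * Real.exp (-(μ^2/32) * (m:ℝ)^2) := mul_comm _ _
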